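/- arXiv:0704.2203 — 5 statements merged into one kernel-verified Lean document; each statement's English description precedes it below -/
import Mathlib

section
/- Let D be a (v,k,λ)-difference set in a finite group G and H a subgroup of G of index r. If s is the number of elements of D in some fixed coset of H, then |s - k/r| ≤ √n · (r-1)/r, where n = k - λ. -/
set_option maxHeartbeats 2000000 in
/-- If `D` is a `(v,k,λ)`-difference set in a finite group `G` and `H` a subgroup
of index `r`, and `s` is the number of elements of `D` in the coset `Hx`, then
`|s - k/r| ≤ √n · (r-1)/r` where `n = k - λ`. -/
theorem stmt1 {G : Type*} [Group G] [Fintype G] [DecidableEq G]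
    (v k l : ℕ) (D : Finset G)
    (hv : Fintype.card G = v) (hk : D.card = k)
    (hD : ∀ g : G, g ≠ 1 →
      ((D ×ˢ D).filter (fun p => p.1 * p.2⁻¹ = g)).card = l)
    (H : Subgroup G) [DecidablePred (· ∈ H)] (r : ℕ) (hr : H.index = r)
    (x : G) (s : ℕ) (hs : s = (D.filter (fun d => d * x⁻¹ ∈ H)).card) :
    |(s : ℝ) - (k : ℝ) / r| ≤ Real.sqrt ((k : ℝ) - l) * ((r : ℝ) - 1) / r := by
  classical
  subst hv hk hr hs
  set φ : G → G ⧸ H := fun g => QuotientGroup.mk g⁻¹ with hφ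
  have hφeq : ∀ a b : G, φ a = φ b ↔ a * b⁻¹ ∈ H := by
    intro a b
    simp only [hφ, QuotientGroup.eq, inv_inv]
  set f : G ⧸ H → ℕ := fun q => (D.filter (fun d => φ d = q)).card with hf
  -- the coset count s equals f (φ x)
  have hfx : (D.filter (fun d => d * x⁻¹ ∈ H)).card = f (φ x) := by
    congr 1
    ext d
    simp [hf, hφeq d x]
  -- r ≠ 0 and card of quotient is r
  have hrne : H.index ≠ 0 := Subgroup.index_ne_zero_of_finite
  have hcardQ : Fintype.card (G ⧸ H) = H.index := by
    rw [Subgroup.index, Nat.card_eq_fintype_card]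
  -- deal with r = 1
  rcases eq_or_lt_of_le (Nat.one_le_iff_ne_zero.2 hrne) with h1 | hr2
  · -- index 1 : H = ⊤
    have hH : H = ⊤ := Subgroup.index_eq_one.1 h1.symm
    have : (D.filter (fun d => d * x⁻¹ ∈ H)) = D := by
      apply Finset.filter_true_of_mem
      intro d _
      simp [hH]
    rw [this, ← h1]
    simp
  -- now r ≥ 2
  -- sum identity A
  have hA : ∑ q : G ⧸ H, f q = D.card := by
    exact (Finset.card_eq_sum_card_fiberwise (fun d _ => Finset.mem_univ (φ d))).symm
  -- sum identity B
  have hB : ∑ q : G ⧸ H, (f q) ^ 2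
      = ((D ×ˢ D).filter (fun p => p.1 * p.2⁻¹ ∈ H)).card := by
    rw [Finset.card_eq_sum_card_fiberwise
      (f := fun p => φ p.1) (t := Finset.univ) (fun p _ => Finset.mem_univ _)]
    refine Finset.sum_congr rfl fun q _ => ?_
    have : ((D ×ˢ D).filter (fun p => p.1 * p.2⁻¹ ∈ H)).filter (fun p => φ p.1 = q)
        = (D.filter (fun d => φ d = q)) ×ˢ (D.filter (fun d => φ d = q)) := by
      ext ⟨a, b⟩
      simp only [Finset.mem_filter, Finset.mem_product, ← hφeq]
      constructor
      · rintro ⟨⟨⟨ha, hb⟩, hab⟩, haq⟩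
        exact ⟨⟨ha, haq⟩, hb, hab ▸ haq⟩
      · rintro ⟨⟨ha, haq⟩, hb, hbq⟩
        exact ⟨⟨⟨ha, hb⟩, haq.trans hbq.symm⟩, haq⟩
    rw [this, Finset.card_product, sq, hf]
  -- count pairs with difference in a finset of group elements
  have hcount : ∀ T : Finset G, (1 : G) ∈ T →
      ((D ×ˢ D).filter (fun p => p.1 * p.2⁻¹ ∈ T)).card = D.card + l * (T.card - 1) := by
    intro T hT
    have hpart := Finset.card_eq_sum_card_fiberwise
      (s := (D ×ˢ D).filter (fun p => p.1 * p.2⁻¹ ∈ T)) (t := T)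
      (f := fun p => p.1 * p.2⁻¹)
      (fun p hp => (Finset.mem_filter.1 hp).2)
    rw [hpart]
    have hfib : ∀ g ∈ T,
        (((D ×ˢ D).filter (fun p => p.1 * p.2⁻¹ ∈ T)).filter
          (fun p => p.1 * p.2⁻¹ = g)).card
        = ((D ×ˢ D).filter (fun p => p.1 * p.2⁻¹ = g)).card := by
      intro g hg
      congr 1
      rw [Finset.filter_filter]
      apply Finset.filter_congr
      intro p _
      constructor
      · rintro ⟨_, h⟩; exact h
      · intro h; exact ⟨h ▸ hg, h⟩
    rw [Finset.sum_congr rfl hfib]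
    rw [← Finset.add_sum_erase _ _ hT]
    have h1 : ((D ×ˢ D).filter (fun p => p.1 * p.2⁻¹ = 1)).card = D.card := by
      have : ((D ×ˢ D).filter (fun p => p.1 * p.2⁻¹ = (1 : G))) = D.diag := by
        ext ⟨a, b⟩
        simp only [Finset.mem_filter, Finset.mem_product, Finset.mem_diag, mul_inv_eq_one]
        constructor
        · rintro ⟨⟨ha, hb⟩, hab⟩; exact ⟨ha, hab⟩
        · rintro ⟨ha, hab⟩; exact ⟨⟨ha, hab ▸ ha⟩, hab⟩
      rw [this, Finset.diag_card]
    have h2 : ∑ g ∈ T.erase 1, ((D ×ˢ D).filter (fun p => p.1 * p.2⁻¹ = g)).card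
        = l * (T.card - 1) := by
      rw [Finset.sum_congr rfl (fun g hg => hD g (Finset.mem_erase.1 hg).1),
        Finset.sum_const, Finset.card_erase_of_mem hT, smul_eq_mul, Nat.mul_comm]
    rw [h1, h2]
  -- identity over H
  have hBH : ∑ q : G ⧸ H, (f q) ^ 2 = D.card + l * (Fintype.card H - 1) := by
    have hHT : ((D ×ˢ D).filter (fun p => p.1 * p.2⁻¹ ∈ H))
        = ((D ×ˢ D).filter (fun p => p.1 * p.2⁻¹ ∈ Finset.univ.filter (· ∈ H))) := by
      simp
    rw [hB, hHT, hcount (Finset.univ.filter (· ∈ H)) (by simp [H.one_mem])]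
    congr 2
    rw [Fintype.card_subtype]
  -- identity over G
  have hDG : D.card * D.card = D.card + l * (Fintype.card G - 1) := by
    have := hcount Finset.univ (Finset.mem_univ 1)
    rw [Finset.filter_true_of_mem (fun p _ => Finset.mem_univ _),
      Finset.card_product, Finset.card_univ] at this
    exact this
  have hmr : Fintype.card H * H.index = Fintype.card G := by
    rw [← Nat.card_eq_fintype_card, ← Nat.card_eq_fintype_card]
    exact Subgroup.card_mul_index H
  -- move to ℝ
  have hm1 : 1 ≤ Fintype.card H := Fintype.card_pos
  have hv1 : 1 ≤ Fintype.card G := Fintype.card_pos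
  have hr'0 : (0 : ℝ) < (H.index : ℝ) := by exact_mod_cast Nat.pos_of_ne_zero hrne
  have hr'ne : (H.index : ℝ) ≠ 0 := ne_of_gt hr'0
  have hr'1 : (2 : ℝ) ≤ (H.index : ℝ) := by exact_mod_cast hr2
  have hA' : ∑ q : G ⧸ H, (f q : ℝ) = (D.card : ℝ) := by exact_mod_cast hA
  have hB' : ∑ q : G ⧸ H, (f q : ℝ) ^ 2
      = (D.card : ℝ) + (l : ℝ) * ((Fintype.card H : ℝ) - 1) := by
    have h := congrArg (fun n : ℕ => (n : ℝ)) hBH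
    push_cast [Nat.cast_sub hm1] at h
    exact_mod_cast h
  have hD' : (D.card : ℝ) * (D.card : ℝ)
      = (D.card : ℝ) + (l : ℝ) * ((Fintype.card H : ℝ) * (H.index : ℝ) - 1) := by
    rw [← hmr] at hDG
    have hmr1 : 1 ≤ Fintype.card H * H.index :=
      Nat.one_le_iff_ne_zero.2 (Nat.mul_ne_zero (by omega) hrne)
    have h := congrArg (fun n : ℕ => (n : ℝ)) hDG
    push_cast [Nat.cast_sub hmr1] at h
    exact_mod_cast h
  -- the key variance identity
  have hkey : ∑ q : G ⧸ H, ((f q : ℝ) - (D.card : ℝ) / (H.index : ℝ)) ^ 2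
      = ((D.card : ℝ) - (l : ℝ)) * ((H.index : ℝ) - 1) / (H.index : ℝ) := by
    have expand : ∀ q : G ⧸ H, ((f q : ℝ) - (D.card : ℝ) / (H.index : ℝ)) ^ 2
        = (f q : ℝ) ^ 2 - 2 * ((D.card : ℝ) / (H.index : ℝ)) * (f q : ℝ)
          + ((D.card : ℝ) / (H.index : ℝ)) ^ 2 := fun q => by ring
    rw [Finset.sum_congr rfl (fun q _ => expand q)]
    rw [Finset.sum_add_distrib, Finset.sum_sub_distrib, ← Finset.mul_sum,
      Finset.sum_const, Finset.card_univ, hcardQ, hA', hB', nsmul_eq_mul]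
    field_simp
    linear_combination (-1 : ℝ) * hD'
  set q0 := φ x with hq0
  set t : G ⧸ H → ℝ := fun q => (f q : ℝ) - (D.card : ℝ) / (H.index : ℝ) with ht
  have hkey' : ∑ q : G ⧸ H, (t q) ^ 2
      = ((D.card : ℝ) - (l : ℝ)) * ((H.index : ℝ) - 1) / (H.index : ℝ) := hkey
  have hsum0 : ∑ q : G ⧸ H, t q = 0 := by
    simp only [ht]
    rw [Finset.sum_sub_distrib, hA', Finset.sum_const, Finset.card_univ, hcardQ,
      nsmul_eq_mul]
    field_simp
    ring
  clear_value t q0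
  have herase : ∑ q ∈ Finset.univ.erase q0, t q = - t q0 := by
    have h := Finset.add_sum_erase Finset.univ t (Finset.mem_univ q0)
    linarith [hsum0, h]
  have heraseSq : ∑ q ∈ Finset.univ.erase q0, (t q) ^ 2
      = ((D.card : ℝ) - (l : ℝ)) * ((H.index : ℝ) - 1) / (H.index : ℝ) - (t q0) ^ 2 := by
    have h : ∑ q ∈ Finset.univ.erase q0, (t q) ^ 2 + (t q0) ^ 2
        = ∑ q : G ⧸ H, (t q) ^ 2 :=
      Finset.sum_erase_add Finset.univ (fun q => (t q) ^ 2) (Finset.mem_univ q0)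
    rw [eq_sub_iff_add_eq, ← hkey']
    exact h
  have hCS := sq_sum_le_card_mul_sum_sq (s := Finset.univ.erase q0) (f := t)
  rw [herase, Finset.card_erase_of_mem (Finset.mem_univ q0), Finset.card_univ, hcardQ,
    heraseSq, neg_sq] at hCS
  have hcast : ((H.index - 1 : ℕ) : ℝ) = (H.index : ℝ) - 1 := by
    push_cast [Nat.one_le_iff_ne_zero.2 hrne]
    ring
  rw [hcast] at hCS
  -- n ≥ 0
  have hn0 : (0 : ℝ) ≤ (D.card : ℝ) - (l : ℝ) := by
    have hS0 : (0 : ℝ) ≤ ((D.card : ℝ) - (l : ℝ)) * ((H.index : ℝ) - 1) / (H.index : ℝ) :=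
      hkey' ▸ Finset.sum_nonneg (fun q _ => sq_nonneg _)
    by_contra hneg
    push_neg at hneg
    have : ((D.card : ℝ) - (l : ℝ)) * ((H.index : ℝ) - 1) / (H.index : ℝ) < 0 := by
      apply div_neg_of_neg_of_pos _ hr'0
      nlinarith
    linarith
  -- final bound on (t q0)^2
  have hCS2 : (t q0) ^ 2 * (H.index : ℝ)
      ≤ ((H.index : ℝ) - 1)
        * (((D.card : ℝ) - (l : ℝ)) * ((H.index : ℝ) - 1) - (t q0) ^ 2 * (H.index : ℝ)) := by
    have h3 := mul_le_mul_of_nonneg_right hCS hr'0.le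
    have hcancel : ((D.card : ℝ) - (l : ℝ)) * ((H.index : ℝ) - 1) / (H.index : ℝ)
        * (H.index : ℝ) = ((D.card : ℝ) - (l : ℝ)) * ((H.index : ℝ) - 1) :=
      div_mul_cancel₀ _ hr'ne
    have h4 : ((H.index : ℝ) - 1)
        * (((D.card : ℝ) - (l : ℝ)) * ((H.index : ℝ) - 1) / (H.index : ℝ) - (t q0) ^ 2)
          * (H.index : ℝ)
        = ((H.index : ℝ) - 1)
          * (((D.card : ℝ) - (l : ℝ)) * ((H.index : ℝ) - 1) - (t q0) ^ 2 * (H.index : ℝ)) :=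
      calc ((H.index : ℝ) - 1)
          * (((D.card : ℝ) - (l : ℝ)) * ((H.index : ℝ) - 1) / (H.index : ℝ) - (t q0) ^ 2)
            * (H.index : ℝ)
          = ((H.index : ℝ) - 1)
            * (((D.card : ℝ) - (l : ℝ)) * ((H.index : ℝ) - 1) / (H.index : ℝ) * (H.index : ℝ)
              - (t q0) ^ 2 * (H.index : ℝ)) := by ring
        _ = ((H.index : ℝ) - 1)
            * (((D.card : ℝ) - (l : ℝ)) * ((H.index : ℝ) - 1) - (t q0) ^ 2 * (H.index : ℝ)) := by
            rw [hcancel]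
    rw [h4] at h3
    exact h3
  have hfinal : (t q0) ^ 2
      ≤ ((D.card : ℝ) - (l : ℝ)) * (((H.index : ℝ) - 1) / (H.index : ℝ)) ^ 2 := by
    rw [div_pow, ← mul_div_assoc, le_div_iff₀ (by positivity : (0:ℝ) < (H.index : ℝ) ^ 2)]
    nlinarith [hCS2]
  -- conclude
  rw [hfx]
  have habs : |(f q0 : ℝ) - (D.card : ℝ) / (H.index : ℝ)| = Real.sqrt ((t q0) ^ 2) := by
    rw [Real.sqrt_sq_eq_abs]
    simp only [ht]
  rw [habs]
  calc Real.sqrt ((t q0) ^ 2)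
      ≤ Real.sqrt (((D.card : ℝ) - (l : ℝ)) * (((H.index : ℝ) - 1) / (H.index : ℝ)) ^ 2) :=
        Real.sqrt_le_sqrt hfinal
    _ = Real.sqrt ((D.card : ℝ) - (l : ℝ)) * (((H.index : ℝ) - 1) / (H.index : ℝ)) := by
        rw [Real.sqrt_mul hn0, Real.sqrt_sq (div_nonneg (by linarith) hr'0.le)]
    _ = Real.sqrt ((D.card : ℝ) - (l : ℝ)) * ((H.index : ℝ) - 1) / (H.index : ℝ) := by ring
end

section
/- Let D be a normalized (v,k,λ)-difference set in a finite abelian group G with gcd(v,k) = 1, and let σ be an automorphism of G that is a multiplier of D (i.e., σ(D) = gD for some g ∈ G). Then σ(D) = D, i.e., σ fixes D setwise. -/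
/-- If `D` is a normalized `(v,k,λ)`-difference set in a finite abelian group `G`
with `gcd(v,k) = 1` and `σ` is an automorphism of `G` that is a multiplier of `D`
(i.e. `σ(D) = gD` for some `g`), then `σ(D) = D`. -/
theorem stmt4 {G : Type*} [CommGroup G] [Fintype G] [DecidableEq G]
    (v k l : ℕ) (D : Finset G)
    (hv : Fintype.card G = v) (hk : D.card = k)
    (hD : ∀ g : G, g ≠ 1 →
      ((D ×ˢ D).filter (fun p => p.1 * p.2⁻¹ = g)).card = l)
    (hgcd : Nat.gcd v k = 1)
    (hnorm : ∏ d ∈ D, d = 1)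
    (σ : G ≃* G)
    (hmult : ∃ g : G, D.image σ = D.image (fun d => g * d)) :
    D.image σ = D := by
  obtain ⟨g, hg⟩ := hmult
  have hprod : ∏ x ∈ D.image σ, x = ∏ x ∈ D.image (fun d => g * d), x := by rw [hg]
  rw [Finset.prod_image (fun a _ b _ h => σ.injective h),
      Finset.prod_image (fun a _ b _ h => mul_left_cancel h)] at hprod
  have h1 : ∏ d ∈ D, σ d = 1 := by
    rw [← map_prod σ, hnorm, map_one]
  have h2 : ∏ d ∈ D, (g * d) = g ^ k * ∏ d ∈ D, d := by
    rw [Finset.prod_mul_distrib, Finset.prod_const, hk]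
  have hgk : g ^ k = 1 := by
    rw [h1, h2, hnorm, mul_one] at hprod
    exact hprod.symm
  have hgv : g ^ v = 1 := by
    rw [← hv]; exact pow_card_eq_one
  have hg1 : g = 1 := by
    have h := (pow_gcd_eq_one (a := g)).mpr ⟨hgv, hgk⟩
    rwa [hgcd, pow_one] at h
  rw [hg, hg1]
  ext x
  simp
end

section
/- Let q ≥ 2 be an integer and s an odd positive integer. Then gcd(q⁴ - 1, (q^s + 1)(q^{2s} + 1)) = (q + 1)(q² + 1). -/
private lemma geomN (x m : ℕ) (hx : 1 ≤ x) :
    (x - 1) * (∑ j ∈ Finset.range m, x ^ j) + 1 = x ^ m := by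
  obtain ⟨p, rfl⟩ : ∃ p, x = p + 1 := ⟨x - 1, by omega⟩
  simp only [Nat.add_sub_cancel]
  induction m with
  | zero => simp
  | succ m ih =>
    rw [Finset.sum_range_succ, mul_add]
    calc p * ∑ j ∈ Finset.range m, (p+1) ^ j + p * (p+1) ^ m + 1
        = (p * ∑ j ∈ Finset.range m, (p+1) ^ j + 1) + p * (p+1) ^ m := by ring
      _ = (p+1) ^ m + p * (p+1) ^ m := by rw [ih]
      _ = (p+1) ^ (m+1) := by ring

private lemma key2 (q m : ℕ) (hq : 1 ≤ q) :
    ∃ B, q ^ (2 * m + 1) + 1 = (q + 1) * (1 + (q - 1) * B) := by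
  obtain ⟨p, rfl⟩ : ∃ p, q = p + 1 := ⟨q - 1, by omega⟩
  have hg := geomN ((p+1)^2) m (by nlinarith)
  have h1 : (p+1)^2 - 1 = p * (p+2) := by
    have : (p+1)^2 = p * (p+2) + 1 := by ring
    omega
  rw [h1] at hg
  refine ⟨(p+1) * ∑ j ∈ Finset.range m, ((p+1)^2) ^ j, ?_⟩
  simp only [Nat.add_sub_cancel]
  rw [pow_succ, pow_mul, ← hg]
  ring

/-- For `q ≥ 2` and odd positive `s`,
`gcd(q⁴ - 1, (q^s + 1)(q^{2s} + 1)) = (q + 1)(q² + 1)`. -/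
theorem stmt9 (q s : ℕ) (hq : 2 ≤ q) (hs : Odd s) (hs' : 0 < s) :
    Nat.gcd (q ^ 4 - 1) ((q ^ s + 1) * (q ^ (2 * s) + 1))
      = (q + 1) * (q ^ 2 + 1) := by
  obtain ⟨m, rfl⟩ := hs
  obtain ⟨B, hB⟩ := key2 q m (by omega)
  obtain ⟨B2, hB2⟩ := key2 (q ^ 2) m (by nlinarith)
  obtain ⟨p, rfl⟩ : ∃ p, q = p + 2 := ⟨q - 2, by omega⟩
  have h1 : (p + 2) - 1 = p + 1 := by omega
  have h2 : (p + 2) ^ 2 - 1 = (p + 1) * (p + 3) := by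
    have : (p + 2) ^ 2 = (p + 1) * (p + 3) + 1 := by ring
    omega
  rw [h1] at hB
  rw [h2] at hB2
  set D := ((p + 2) + 1) * ((p + 2) ^ 2 + 1) with hD
  set C := B + (p + 3) * B2 + (p + 1) * (p + 3) * (B * B2) with hC
  have hM : (p + 2) ^ 4 - 1 = (p + 1) * D := by
    apply Nat.sub_eq_of_eq_add
    rw [hD]; ring
  have hN : ((p + 2) ^ (2 * m + 1) + 1) * ((p + 2) ^ (2 * (2 * m + 1)) + 1)
      = (1 + (p + 1) * C) * D := by
    have e : (p + 2) ^ (2 * (2 * m + 1)) = ((p + 2) ^ 2) ^ (2 * m + 1) := by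
      rw [← pow_mul]
    rw [e, hB, hB2, hD, hC]; ring
  rw [hM, hN, Nat.gcd_mul_right]
  have hcop : Nat.Coprime (p + 1) (1 + (p + 1) * C) :=
    (Nat.coprime_add_mul_left_right (p + 1) 1 C).mpr (Nat.coprime_one_right _)
  rw [hcop, one_mul]
end

section
/- Let q ≥ 2 be a power of a prime and set v = (q+1)(q²+1), k = q²+q+1, λ = q+1. Suppose s₁, ..., s_{q+1} are nonnegative integers with ∑sᵢ = k, ∑sᵢ² = λ(q²+1) + q², and sᵢ ≡ s_j (mod q) for all i,j. Then exactly one of the sᵢ equals 1 and the rest equal q + 1. -/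
private lemma sum_modeq {α : Type*} (t : Finset α) (f g : α → ℕ) (n : ℕ)
    (h : ∀ a ∈ t, f a ≡ g a [MOD n]) :
    (∑ a ∈ t, f a) ≡ (∑ a ∈ t, g a) [MOD n] := by
  induction t using Finset.cons_induction with
  | empty => rfl
  | cons a t ha ih =>
    rw [Finset.sum_cons, Finset.sum_cons]
    exact (h a (Finset.mem_cons_self a t)).add
      (ih fun b hb => h b (Finset.mem_cons_of_mem hb))

/-- Let `q ≥ 2` be a prime power, `v = (q+1)(q²+1)`, `k = q²+q+1`, `λ = q+1`.
If `s₁,…,s_{q+1}` are nonnegative integers with `∑ sᵢ = k`,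
`∑ sᵢ² = λ(q²+1) + q²`, and all `sᵢ` congruent modulo `q`, then exactly one of
the `sᵢ` is `1` and the rest equal `q + 1`. -/
theorem stmt11 (q : ℕ) (hq : 2 ≤ q)
    (hq' : ∃ p n : ℕ, p.Prime ∧ 0 < n ∧ q = p ^ n)
    (s : Fin (q + 1) → ℕ)
    (h1 : ∑ i, s i = q ^ 2 + q + 1)
    (h2 : ∑ i, (s i) ^ 2 = (q + 1) * (q ^ 2 + 1) + q ^ 2)
    (h3 : ∀ i j, s i ≡ s j [MOD q]) :
    ∃! i : Fin (q + 1), s i = 1 ∧ ∀ j ≠ i, s j = q + 1 := by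
  have hq0 : 0 < q := by omega
  -- Step 1: all s i ≡ 1 mod q
  have hmod : ∀ i, s i % q = 1 := by
    have hsum : (∑ i, s i) % q = ((q + 1) * s 0) % q := by
      have := sum_modeq Finset.univ s (fun _ => s 0) q (fun i _ => h3 i 0)
      simpa [Finset.sum_const, mul_comm, Nat.ModEq] using this
    have e2 : ((q + 1) * s 0) % q = (s 0) % q := by
      conv_lhs => rw [show (q + 1) * s 0 = s 0 + q * s 0 by ring]
      rw [Nat.add_mul_mod_self_left]
    have e3 : (q ^ 2 + q + 1) % q = 1 := by
      rw [show q ^ 2 + q + 1 = 1 + (q + 1) * q by ring, Nat.add_mul_mod_self_right,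
        Nat.mod_eq_of_lt (by omega)]
    have h0 : s 0 % q = 1 := by rw [← e2, ← hsum, h1, e3]
    intro i
    have := h3 i 0
    unfold Nat.ModEq at this
    rw [this, h0]
  -- Step 2: each s i = q * t i + 1
  set t : Fin (q + 1) → ℕ := fun i => s i / q with ht
  have hst : ∀ i, s i = q * t i + 1 := fun i => by
    have h := Nat.div_add_mod (s i) q
    rw [hmod i] at h
    exact h.symm
  -- Step 3: ∑ t = q and ∑ t² = q
  have hT1 : ∑ i, t i = q := by
    have e : ∑ i, s i = q * ∑ i, t i + (q + 1) := by
      calc ∑ i, s i = ∑ i, (q * t i + 1) := Finset.sum_congr rfl (fun i _ => hst i)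
        _ = (∑ i, q * t i) + ∑ _i : Fin (q + 1), (1 : ℕ) := Finset.sum_add_distrib
        _ = q * ∑ i, t i + (q + 1) := by rw [← Finset.mul_sum]; simp
    rw [h1] at e
    have hsq : q ^ 2 = q * q := sq q
    have : q * ∑ i, t i = q * q := by linarith
    exact Nat.eq_of_mul_eq_mul_left hq0 this
  have hT2 : ∑ i, t i ^ 2 = q := by
    have e : ∑ i, s i ^ 2 = q ^ 2 * ∑ i, t i ^ 2 + 2 * q * ∑ i, t i + (q + 1) := by
      calc ∑ i, s i ^ 2 = ∑ i, (q ^ 2 * t i ^ 2 + 2 * q * t i + 1) :=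
            Finset.sum_congr rfl (fun i _ => by rw [hst i]; ring)
        _ = (∑ i, (q ^ 2 * t i ^ 2 + 2 * q * t i)) + ∑ _i : Fin (q + 1), (1 : ℕ) := by
            rw [← Finset.sum_add_distrib]
        _ = (∑ i, q ^ 2 * t i ^ 2) + (∑ i, 2 * q * t i) + (q + 1) := by
            rw [Finset.sum_add_distrib]; simp
        _ = q ^ 2 * ∑ i, t i ^ 2 + 2 * q * ∑ i, t i + (q + 1) := by
            rw [← Finset.mul_sum, ← Finset.mul_sum]
    rw [h2, hT1] at e
    have e' : (q + 1) * (q ^ 2 + 1) + q ^ 2 = q ^ 2 * q + 2 * q * q + (q + 1) := by ring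
    have : q ^ 2 * ∑ i, t i ^ 2 = q ^ 2 * q := by linarith
    exact Nat.eq_of_mul_eq_mul_left (by positivity) this
  -- Step 4: each t i ∈ {0,1}
  have hle : ∀ i ∈ Finset.univ, t i ≤ t i ^ 2 := fun i _ =>
    Nat.le_self_pow two_ne_zero (t i)
  have heq : ∀ i ∈ (Finset.univ : Finset (Fin (q + 1))), t i = t i ^ 2 :=
    (Finset.sum_eq_sum_iff_of_le hle).mp (by rw [hT1, hT2])
  have ht01 : ∀ i, t i = 0 ∨ t i = 1 := by
    intro i
    have h := heq i (Finset.mem_univ i)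
    rcases le_or_gt (t i) 1 with h'|h'
    · omega
    · exfalso; nlinarith [h, h']
  -- Step 5: exactly one zero
  set A : Finset (Fin (q + 1)) := Finset.univ.filter (fun i => t i = 0) with hA
  set B : Finset (Fin (q + 1)) := Finset.univ.filter (fun i => ¬ t i = 0) with hB
  have hBcard : B.card = q := by
    have e : B.card = ∑ i, t i := by
      rw [Finset.card_eq_sum_ones, Finset.sum_filter]
      exact Finset.sum_congr rfl fun i _ => by rcases ht01 i with h|h <;> simp [h]
    rw [e, hT1]
  have hABcard : A.card + B.card = q + 1 := by
    rw [hA, hB, Finset.card_filter_add_card_filter_not]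
    simp
  have hAcard : A.card = 1 := by omega
  obtain ⟨i₀, hi₀⟩ := Finset.card_eq_one.mp hAcard
  have hmemA : ∀ j, t j = 0 ↔ j = i₀ := by
    intro j
    constructor
    · intro hj
      have : j ∈ A := by simp [hA, hj]
      rw [hi₀] at this; simpa using this
    · intro hj
      have : j ∈ A := by rw [hi₀, Finset.mem_singleton]; exact hj
      simpa [hA] using this
  refine ⟨i₀, ⟨?_, ?_⟩, ?_⟩
  · rw [hst i₀, (hmemA i₀).mpr rfl]; simp
  · intro j hj
    have htj : t j = 1 := by
      rcases ht01 j with h|h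
      · exact absurd ((hmemA j).mp h) hj
      · exact h
    rw [hst j, htj, mul_one, add_comm]
  · rintro j ⟨hj1, -⟩
    have : q * t j + 1 = 1 := by rw [← hst j, hj1]
    have : t j = 0 := by
      rcases ht01 j with h|h
      · exact h
      · rw [h, mul_one] at this; omega
    exact (hmemA j).mp this
end

section
/- Let q ≥ 2 and s an odd prime with s ∤ q² + 1 and s ∤ q + 1. Let G be an abelian group of order (q^s+1)(q^{2s}+1) whose Sylow r-subgroups are cyclic for every prime r dividing gcd(q+1,s) or gcd(q²+1,s). Then the fixed-point subgroup of the automorphism τ: x ↦ x^{q⁴} of G has order (q+1)(q²+1). -/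
open Finset

/-- If every element of a subgroup `K` is killed by `t`, and `t` is coprime to `c`,
then `Nat.card K` is coprime to `c`. -/
lemma coprime_card_of_pow_eq_one {G : Type*} [Group G] [Finite G] (K : Subgroup G)
    (t c : ℕ) (hK : ∀ x ∈ K, x ^ t = 1) (h : Nat.Coprime t c) :
    Nat.Coprime (Nat.card K) c := by
  by_contra hcon
  obtain ⟨p, pp, h1, h2⟩ := Nat.Prime.not_coprime_iff_dvd.mp hcon
  haveI : Fact p.Prime := ⟨pp⟩
  obtain ⟨g, hg⟩ := exists_prime_orderOf_dvd_card' (G := K) p h1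
  have hgt : (g : G) ^ t = 1 := hK g g.2
  have hgt' : g ^ t = 1 := by
    ext
    simpa using hgt
  have hpt : p ∣ t := hg ▸ orderOf_dvd_of_pow_eq_one hgt'
  have : p ∣ 1 := h ▸ Nat.dvd_gcd hpt h2
  exact pp.one_lt.ne' (Nat.dvd_one.mp this)

/-- Key group-theoretic lemma: in a finite abelian group of order `a * w` with
`a ∣ m` and `gcd(m, w) = 1`, the set of `m`-th roots of `1` has exactly `a` elements. -/
lemma card_pow_eq_one_eq {G : Type*} [CommGroup G] [Fintype G] (a w m : ℕ)
    (ha : a ∣ m) (hmw : Nat.Coprime m w) (hcard : Fintype.card G = a * w) :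
    Nat.card {x : G // x ^ m = 1} = a := by
  have hcard' : Nat.card G = a * w := by rw [Nat.card_eq_fintype_card, hcard]
  have haw : Nat.Coprime a w := Nat.Coprime.coprime_dvd_left ha hmw
  have hpos : 0 < a * w := hcard ▸ Fintype.card_pos
  have hapos : 0 < a := Nat.pos_of_ne_zero (by rintro rfl; simp at hpos)
  have hwpos : 0 < w := Nat.pos_of_ne_zero (by rintro rfl; simp at hpos)
  -- x ^ m = 1 ↔ x ^ a = 1
  have hiff : ∀ x : G, x ^ m = 1 ↔ x ^ a = 1 := by
    intro x
    constructor
    · intro hx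
      have h1 : orderOf x ∣ m := orderOf_dvd_of_pow_eq_one hx
      have h2 : orderOf x ∣ a * w := hcard ▸ orderOf_dvd_card
      have h3 : Nat.Coprime (orderOf x) w := Nat.Coprime.coprime_dvd_left h1 hmw
      exact orderOf_dvd_iff_pow_eq_one.mp (h3.dvd_of_dvd_mul_right h2)
    · intro hx
      obtain ⟨c, rfl⟩ := ha
      rw [pow_mul, hx, one_pow]
  let K : Subgroup G := (powMonoidHom a : G →* G).ker
  let φ : G →* G := powMonoidHom w
  have hKmem : ∀ x : G, x ∈ K ↔ x ^ a = 1 := fun x => Iff.rfl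
  -- K = range of φ
  have hrange : φ.range = K := by
    ext x
    simp only [MonoidHom.mem_range, MonoidHom.mem_ker, φ, K, powMonoidHom_apply]
    constructor
    · rintro ⟨y, rfl⟩
      rw [← pow_mul, Nat.mul_comm, ← hcard, pow_card_eq_one]
    · intro hx
      have hox : Nat.Coprime w (Nat.card (Subgroup.zpowers x)) := by
        rw [Nat.card_zpowers]
        exact Nat.Coprime.coprime_dvd_right (orderOf_dvd_of_pow_eq_one hx) haw.symm
      obtain ⟨y, hy⟩ := (powCoprime hox.symm).surjective ⟨x, Subgroup.mem_zpowers x⟩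
      refine ⟨(y : G), ?_⟩
      have := congrArg (Subtype.val) hy
      simpa [powCoprime_apply] using this
  -- cardinalities
  have hker : Nat.card K * Nat.card φ.ker = a * w := by
    have h1 : Nat.card G = Nat.card (G ⧸ φ.ker) * Nat.card φ.ker :=
      Subgroup.card_eq_card_quotient_mul_card_subgroup φ.ker
    have h2 : Nat.card (G ⧸ φ.ker) = Nat.card φ.range :=
      Nat.card_congr (QuotientGroup.quotientKerEquivRange φ).toEquiv
    rw [← hcard', h1, h2, hrange]
  have hKdvd : Nat.card K ∣ a := by
    have hd : Nat.card K ∣ a * w := hcard' ▸ Subgroup.card_subgroup_dvd_card K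
    have hco : Nat.Coprime (Nat.card K) w :=
      coprime_card_of_pow_eq_one K a w (fun x hx => hx) haw
    exact hco.dvd_of_dvd_mul_right hd
  have hFdvd : Nat.card φ.ker ∣ w := by
    have hd : Nat.card φ.ker ∣ a * w := hcard' ▸ Subgroup.card_subgroup_dvd_card φ.ker
    have hco : Nat.Coprime (Nat.card φ.ker) a :=
      coprime_card_of_pow_eq_one φ.ker w a (fun x hx => hx) haw.symm
    rw [Nat.mul_comm] at hd
    exact hco.dvd_of_dvd_mul_right hd
  have hKa : Nat.card K = a := by
    obtain ⟨e, he⟩ := hFdvd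
    have hy : 0 < Nat.card φ.ker := Nat.card_pos
    have hae : Nat.card K = a * e := by
      refine Nat.eq_of_mul_eq_mul_right hy ?_
      rw [he] at hker
      exact hker.trans (by ring)
    exact Nat.dvd_antisymm hKdvd ⟨e, hae⟩
  calc Nat.card {x : G // x ^ m = 1}
      = Nat.card {x : G // x ^ a = 1} := Nat.card_congr (Equiv.subtypeEquivRight hiff)
    _ = Nat.card K := rfl
    _ = a := hKa

/-- Number theory: if `s` is an odd prime not dividing `q+1` and
`q^s + 1 = (q+1) * u`, then `u` is coprime to `q^4 - 1`. -/
lemma coprime_cofactor (q s u : ℕ) (hq : 1 ≤ q) (hs : s.Prime) (hsodd : Odd s)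
    (hns : ¬ s ∣ q + 1) (hu : q ^ s + 1 = (q + 1) * u) :
    Nat.Coprime (q ^ 4 - 1) u := by
  by_contra h
  obtain ⟨p, pp, h1, h2⟩ := Nat.Prime.not_coprime_iff_dvd.mp h
  haveI : Fact p.Prime := ⟨pp⟩
  have hq4 : 1 ≤ q ^ 4 := Nat.one_le_pow _ _ hq
  have hx4 : (q : ZMod p) ^ 4 = 1 := by
    have h0 : ((q ^ 4 - 1 : ℕ) : ZMod p) = 0 :=
      (ZMod.natCast_eq_zero_iff _ _).mpr h1
    have : ((q : ZMod p) ^ 4 - 1 : ZMod p) = 0 := by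
      rw [← h0, Nat.cast_sub hq4]; push_cast; ring
    linear_combination this
  have hxs : (q : ZMod p) ^ s = -1 := by
    have hdvd : p ∣ q ^ s + 1 := by
      rw [hu]; exact Dvd.dvd.mul_left h2 _
    have h0 : ((q ^ s + 1 : ℕ) : ZMod p) = 0 :=
      (ZMod.natCast_eq_zero_iff _ _).mpr hdvd
    push_cast at h0
    linear_combination h0
  have hx : (q : ZMod p) = -1 := by
    set x := (q : ZMod p) with hxdef
    have hsm : s = 4 * (s / 4) + s % 4 := by omega
    have hr : x ^ (s % 4) = -1 := by
      rw [hsm, pow_add, pow_mul, hx4, one_pow, one_mul] at hxs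
      exact hxs
    have hmod : s % 4 = 1 ∨ s % 4 = 3 := by
      obtain ⟨t, rfl⟩ := hsodd; omega
    rcases hmod with hm | hm
    · rw [hm, pow_one] at hr; exact hr
    · rw [hm] at hr
      have h4 : x ^ 3 * x = 1 := by rw [← pow_succ, hx4]
      rw [hr] at h4
      linear_combination -h4
  have hpq1 : p ∣ q + 1 := by
    have h0 : ((q + 1 : ℕ) : ZMod p) = 0 := by push_cast; rw [hx]; ring
    exact (ZMod.natCast_eq_zero_iff _ _).mp h0
  -- u ≡ s (mod p)
  have huZ : (u : ℤ) = ∑ i ∈ range s, (-(q : ℤ)) ^ i := by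
    have hgeo := geom_sum_mul (-(q : ℤ)) s
    rw [Odd.neg_pow hsodd] at hgeo
    have hcast : ((q : ℤ) + 1) * u = (q : ℤ) ^ s + 1 := by
      have := congrArg (fun n : ℕ => (n : ℤ)) hu
      push_cast at this
      linarith [this]
    have key : ((q : ℤ) + 1) * (∑ i ∈ range s, (-(q : ℤ)) ^ i) = (q : ℤ) ^ s + 1 := by
      linear_combination -hgeo
    have hne : ((q : ℤ) + 1) ≠ 0 := by positivity
    exact mul_left_cancel₀ hne (hcast.trans key.symm)
  have hus : (u : ZMod p) = (s : ZMod p) := by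
    have := congrArg (fun n : ℤ => (n : ZMod p)) huZ
    push_cast at this
    rw [hx] at this
    simpa using this
  have hps : p ∣ s := by
    have h0 : (u : ZMod p) = 0 := (ZMod.natCast_eq_zero_iff _ _).mpr h2
    rw [h0] at hus
    exact (ZMod.natCast_eq_zero_iff _ _).mp hus.symm
  have : p = s := (Nat.prime_dvd_prime_iff_eq pp hs).mp hps
  exact hns (this ▸ hpq1)

/-- Let `q ≥ 2`, `s` an odd prime with `s ∤ q² + 1` and `s ∤ q + 1`, and `G` an
abelian group of order `(q^s+1)(q^{2s}+1)` whose Sylow `r`-subgroups are cyclic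
for every prime `r` dividing `gcd(q+1,s)` or `gcd(q²+1,s)`.  Then the
fixed-point subgroup `G^τ = {x : x^{q⁴-1} = 1}` of the automorphism
`τ : x ↦ x^{q⁴}` has order `(q+1)(q²+1)`. -/
theorem stmt18 (q s : ℕ) (hq : 2 ≤ q) (hs : s.Prime) (hsodd : Odd s)
    (hs1 : ¬ s ∣ q ^ 2 + 1) (hs2 : ¬ s ∣ q + 1)
    {G : Type*} [CommGroup G] [Fintype G]
    (hG : Fintype.card G = (q ^ s + 1) * (q ^ (2 * s) + 1))
    (hsyl : ∀ r : ℕ, r.Prime →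
      (r ∣ Nat.gcd (q + 1) s ∨ r ∣ Nat.gcd (q ^ 2 + 1) s) →
      ∀ P : Sylow r G, IsCyclic P) :
    Nat.card {x : G // x ^ (q ^ 4 - 1) = 1} = (q + 1) * (q ^ 2 + 1) := by
  -- factor q^s + 1 = (q+1) * u  and  q^{2s} + 1 = (q^2+1) * v
  obtain ⟨u, hu⟩ : q + 1 ∣ q ^ s + 1 := by
    simpa using Odd.nat_add_dvd_pow_add_pow q 1 hsodd
  obtain ⟨v, hv⟩ : q ^ 2 + 1 ∣ q ^ (2 * s) + 1 := by
    have := Odd.nat_add_dvd_pow_add_pow (q ^ 2) 1 hsodd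
    simpa [← pow_mul] using this
  -- coprimality of q^4 - 1 with u and v
  have hcu : Nat.Coprime (q ^ 4 - 1) u :=
    coprime_cofactor q s u (by omega) hs hsodd hs2 hu
  have hcv : Nat.Coprime (q ^ 4 - 1) v := by
    have h8 : Nat.Coprime ((q ^ 2) ^ 4 - 1) v :=
      coprime_cofactor (q ^ 2) s v (Nat.one_le_pow _ _ (by omega)) hs hsodd hs1
        (by rw [← pow_mul]; exact hv)
    have hdvd : q ^ 4 - 1 ∣ (q ^ 2) ^ 4 - 1 := by
      have : (q ^ 4) ^ 2 - 1 ^ 2 = (q ^ 2) ^ 4 - 1 := by ring_nf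
      calc q ^ 4 - 1 ∣ (q ^ 4) ^ 2 - 1 ^ 2 := Nat.sub_dvd_pow_sub_pow _ 1 2
        _ = (q ^ 2) ^ 4 - 1 := this
    exact Nat.Coprime.coprime_dvd_left hdvd h8
  have hcw : Nat.Coprime (q ^ 4 - 1) (u * v) := Nat.Coprime.mul_right hcu hcv
  -- a divides m
  have ha : (q + 1) * (q ^ 2 + 1) ∣ q ^ 4 - 1 := by
    obtain ⟨k, rfl⟩ : ∃ k, q = k + 2 := ⟨q - 2, by omega⟩
    refine ⟨k + 1, ?_⟩
    have hb : ((k + 2) : ℕ) ^ 4 = ((k + 2) + 1) * (((k + 2)) ^ 2 + 1) * (k + 1) + 1 := by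
      ring
    omega
  -- card G = a * w
  have hcard : Fintype.card G = ((q + 1) * (q ^ 2 + 1)) * (u * v) := by
    rw [hG, hu, hv]; ring
  exact card_pow_eq_one_eq ((q + 1) * (q ^ 2 + 1)) (u * v) (q ^ 4 - 1) ha hcw hcard
end
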